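/- If A is an n×n real matrix that is an M-matrix (a Z-matrix with nonnegative inverse), and B is a Z-matrix with B ≥ A entrywise, then B is also an M-matrix. -/

import Mathlib

open Matrix

def IsZMatrix {n : ℕ} (A : Matrix (Fin n) (Fin n) ℝ) : Prop :=
  ∀ i j, i ≠ j → A i j ≤ 0

/-- An M-matrix: a Z-matrix that is invertible with entrywise nonnegative inverse. -/
def IsMMatrix {n : ℕ} (A : Matrix (Fin n) (Fin n) ℝ) : Prop :=
  IsZMatrix A ∧ IsUnit A ∧ ∀ i j, 0 ≤ A⁻¹ i j

/-- D(x) = diag(sign(x)). -/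
noncomputable def signD {n : ℕ} (x : Fin n → ℝ) : Matrix (Fin n) (Fin n) ℝ :=
  Matrix.diagonal (fun i => Real.sign (x i))

/-- Componentwise absolute value. -/
def absVec {n : ℕ} (x : Fin n → ℝ) : Fin n → ℝ := fun i => |x i|

/-- Spectral (operator 2-) norm of a matrix. -/
noncomputable def specNorm {n : ℕ} (A : Matrix (Fin n) (Fin n) ℝ) : ℝ :=
  ‖Matrix.toEuclideanCLM (𝕜 := ℝ) A‖

section Aux

attribute [local instance] Matrix.linftyOpNormedRing Matrix.linftyOpNormedSpace

noncomputable instance matCompl {n : ℕ} : CompleteSpace (Matrix (Fin n) (Fin n) ℝ) :=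
  FiniteDimensional.complete ℝ _

lemma mul_entries_nonneg {n : ℕ} {P Q : Matrix (Fin n) (Fin n) ℝ}
    (hP : ∀ i j, 0 ≤ P i j) (hQ : ∀ i j, 0 ≤ Q i j) : ∀ i j, 0 ≤ (P * Q) i j := by
  intro i j
  rw [Matrix.mul_apply]
  exact Finset.sum_nonneg fun k _ => mul_nonneg (hP i k) (hQ k j)

lemma pow_entries_nonneg {n : ℕ} {T : Matrix (Fin n) (Fin n) ℝ}
    (hT : ∀ i j, 0 ≤ T i j) : ∀ k i j, 0 ≤ (T ^ k) i j := by
  intro k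
  induction k with
  | zero => intro i j; simp [Matrix.one_apply]; positivity
  | succ m ih => rw [pow_succ]; exact mul_entries_nonneg ih hT

/-- entry evaluation as a continuous linear map -/
noncomputable def entryCLM {n : ℕ} (i j : Fin n) :
    Matrix (Fin n) (Fin n) ℝ →L[ℝ] ℝ :=
  LinearMap.toContinuousLinearMap
    { toFun := fun M => M i j
      map_add' := fun _ _ => rfl
      map_smul' := fun _ _ => rfl }

lemma tsum_pow_entries_nonneg {n : ℕ} {T : Matrix (Fin n) (Fin n) ℝ}
    (hT : ∀ i j, 0 ≤ T i j) (hnorm : ‖T‖ < 1) :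
    ∀ i j, 0 ≤ (∑' k : ℕ, T ^ k) i j := by
  intro i j
  have hsum : Summable (fun k : ℕ => T ^ k) := summable_geometric_of_norm_lt_one hnorm
  have := ((entryCLM i j).hasSum hsum.hasSum).tsum_eq
  have heq : (∑' k : ℕ, T ^ k) i j = ∑' k : ℕ, (T ^ k) i j := by
    exact this.symm
  rw [heq]
  exact tsum_nonneg fun k => pow_entries_nonneg hT k i j

theorem stmt_0 {n : ℕ} (A B : Matrix (Fin n) (Fin n) ℝ)
    (hA : IsMMatrix A) (hB : IsZMatrix B) (hge : ∀ i j, A i j ≤ B i j) :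
    IsMMatrix B := by
  obtain ⟨hAZ, hAu, hAinv⟩ := hA
  -- x = A⁻¹ * 1 is a positive vector with A x = 1
  set x : Fin n → ℝ := A⁻¹ *ᵥ (fun _ => 1) with hxdef
  have hxnn : ∀ i, 0 ≤ x i := by
    intro i
    rw [hxdef, Matrix.mulVec, dotProduct]
    exact Finset.sum_nonneg fun j _ => by simpa using mul_nonneg (hAinv i j) zero_le_one
  have hAx : A *ᵥ x = fun _ => 1 := by
    rw [hxdef, Matrix.mulVec_mulVec, Matrix.mul_nonsing_inv _ ((Matrix.isUnit_iff_isUnit_det A).mp hAu), Matrix.one_mulVec]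
  have hxpos : ∀ i, 0 < x i := by
    intro i
    rcases lt_or_eq_of_le (hxnn i) with h | h
    · exact h
    -- if x i = 0 then row i of A⁻¹ is 0, contradiction with A⁻¹ * A = 1
    · exfalso
      have hsum : ∑ j, A⁻¹ i j = 0 := by
        have := h.symm
        rw [hxdef, Matrix.mulVec, dotProduct] at this
        simpa using this
      have hrow : ∀ j ∈ Finset.univ, A⁻¹ i j = 0 :=
        (Finset.sum_eq_zero_iff_of_nonneg (fun j _ => hAinv i j)).mp hsum
      have h1 : (A⁻¹ * A) i i = 1 := by
        rw [Matrix.nonsing_inv_mul _ ((Matrix.isUnit_iff_isUnit_det A).mp hAu)]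
        simp
      rw [Matrix.mul_apply] at h1
      rw [Finset.sum_eq_zero (fun j _ => by rw [hrow j (Finset.mem_univ j), zero_mul])] at h1
      exact zero_ne_one h1
  have hBx : ∀ i, (1:ℝ) ≤ ∑ j, B i j * x j := by
    intro i
    have : (A *ᵥ x) i ≤ ∑ j, B i j * x j := by
      rw [Matrix.mulVec, dotProduct]
      exact Finset.sum_le_sum fun j _ => mul_le_mul_of_nonneg_right (hge i j) (hxnn j)
    rw [hAx] at this
    exact this
  -- M = B * diag(x): Z-matrix with row sums ≥ 1
  set M : Matrix (Fin n) (Fin n) ℝ := B * Matrix.diagonal x with hMdef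
  have hMapp : ∀ i j, M i j = B i j * x j := fun i j => by
    rw [hMdef, Matrix.mul_diagonal]
  have hMoff : ∀ i j, i ≠ j → M i j ≤ 0 := fun i j hij => by
    rw [hMapp]
    exact mul_nonpos_of_nonpos_of_nonneg (hB i j hij) (hxnn j)
  have hMrow : ∀ i, (1:ℝ) ≤ ∑ j, M i j := by
    intro i
    simpa [hMapp] using hBx i
  have hMdiag : ∀ i, (1:ℝ) ≤ M i i := by
    intro i
    have h1 : M i i + ∑ j ∈ Finset.univ.erase i, M i j = ∑ j, M i j :=
      Finset.add_sum_erase _ _ (Finset.mem_univ i)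
    have h2 : ∑ j ∈ Finset.univ.erase i, M i j ≤ 0 :=
      Finset.sum_nonpos fun j hj => hMoff i j (Ne.symm (Finset.ne_of_mem_erase hj))
    nlinarith [hMrow i]
  have hMpos : ∀ i, (0:ℝ) < M i i := fun i => lt_of_lt_of_le one_pos (hMdiag i)
  -- T = 1 - diag(1/Mii) * M is nonnegative with ‖T‖ < 1
  set Dinv : Matrix (Fin n) (Fin n) ℝ := Matrix.diagonal (fun i => (M i i)⁻¹) with hDinvdef
  set T : Matrix (Fin n) (Fin n) ℝ := 1 - Dinv * M with hTdef
  have hTapp : ∀ i j, T i j = (if i = j then (1:ℝ) else 0) - (M i i)⁻¹ * M i j := by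
    intro i j
    rw [hTdef, Matrix.sub_apply, Matrix.one_apply, hDinvdef, Matrix.diagonal_mul]
  have hTnn : ∀ i j, 0 ≤ T i j := by
    intro i j
    rw [hTapp]
    by_cases hij : i = j
    · subst hij
      rw [if_pos rfl, inv_mul_cancel₀ (ne_of_gt (hMpos i))]
      simp
    · rw [if_neg hij]
      have := mul_nonneg (le_of_lt (inv_pos.mpr (hMpos i))) (neg_nonneg.mpr (hMoff i j hij))
      nlinarith
  have hTrow : ∀ i, ∑ j, T i j < 1 := by
    intro i
    have hsum : ∑ j, T i j = 1 - (M i i)⁻¹ * ∑ j, M i j := by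
      simp only [hTapp, Finset.sum_sub_distrib, Finset.mul_sum]
      congr 1
      simp
    rw [hsum]
    have hi : (0:ℝ) < (M i i)⁻¹ := inv_pos.mpr (hMpos i)
    nlinarith [hMrow i]
  have hnorm : ‖T‖ < 1 := by
    rw [Matrix.linfty_opNorm_def]
    have : ((Finset.univ : Finset (Fin n)).sup fun i => ∑ j, ‖T i j‖₊) < 1 := by
      rw [Finset.sup_lt_iff (by norm_num : (0:NNReal) < 1)]
      intro i _
      rw [← NNReal.coe_lt_coe]
      push_cast
      calc ∑ j, (‖T i j‖₊ : ℝ) = ∑ j, T i j := by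
            refine Finset.sum_congr rfl fun j _ => ?_
            rw [coe_nnnorm, Real.norm_eq_abs, abs_of_nonneg (hTnn i j)]
        _ < 1 := hTrow i
    exact_mod_cast this
  -- Neumann series
  set S : Matrix (Fin n) (Fin n) ℝ := ∑' k : ℕ, T ^ k with hSdef
  have hS1 : (1 - T) * S = 1 := mul_neg_geom_series T hnorm
  have hSnn : ∀ i j, 0 ≤ S i j := tsum_pow_entries_nonneg hTnn hnorm
  set E : Matrix (Fin n) (Fin n) ℝ := Matrix.diagonal (fun i => M i i) with hEdef
  have key1 : E * Dinv = 1 := by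
    rw [hEdef, hDinvdef, Matrix.diagonal_mul_diagonal]
    convert Matrix.diagonal_one using 2
    ext i
    exact mul_inv_cancel₀ (ne_of_gt (hMpos i))
  have key2 : (1 : Matrix (Fin n) (Fin n) ℝ) - T = Dinv * M := sub_sub_cancel _ _
  have key3 : M = E * (1 - T) := by
    rw [key2, ← mul_assoc, key1, one_mul]
  set C : Matrix (Fin n) (Fin n) ℝ := Matrix.diagonal x * (S * Dinv) with hCdef
  have hBC : B * C = 1 := by
    have hMS : M * S = E := by rw [key3, mul_assoc, hS1, mul_one]
    calc B * C = ((B * Matrix.diagonal x) * S) * Dinv := by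
          rw [hCdef, ← mul_assoc, ← mul_assoc]
      _ = (M * S) * Dinv := by rw [← hMdef]
      _ = E * Dinv := by rw [hMS]
      _ = 1 := key1
  have hCnn : ∀ i j, 0 ≤ C i j := by
    rw [hCdef]
    refine mul_entries_nonneg ?_ (mul_entries_nonneg hSnn ?_)
    · intro i j
      rw [Matrix.diagonal_apply]
      split
      · exact hxnn i
      · exact le_refl 0
    · intro i j
      rw [hDinvdef, Matrix.diagonal_apply]
      split
      · exact le_of_lt (inv_pos.mpr (hMpos i))
      · exact le_refl 0
  have hBu : IsUnit B :=
    (Matrix.isUnit_iff_isUnit_det B).mpr (Matrix.isUnit_det_of_right_inverse hBC)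
  exact ⟨hB, hBu, by rw [Matrix.inv_eq_right_inv hBC]; exact hCnn⟩

end Aux
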